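/- Let (T,G) be a graph-partitioned matrix with G = (V,E) a finite connected acyclic undirected graph, and let c > 0. Then (T,G) satisfies the GIRS property with constant c (i.e., rank T⟨Ā,A⟩ ≤ c · E(A) for all A ⊆ V) if and only if T admits a TSS representation on G with rank profile ρ satisfying ρ(e) ≤ c for every directed edge e. -/

import Mathlib

open Matrix

attribute [local instance] Classical.propDecidable

namespace TSS

variable {F : Type*} [Field F] {V : Type*} [Fintype V] [DecidableEq V]

/-- The `(i,j)` block of a graph-partitioned matrix. -/
def blockOf {m n : V → ℕ} (T : Matrix ((i : V) × Fin (m i)) ((j : V) × Fin (n j)) F)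
    (i j : V) : Matrix (Fin (m i)) (Fin (n j)) F :=
  fun a b => T ⟨i, a⟩ ⟨j, b⟩

/-- The submatrix `T⟨A,B⟩` of a graph-partitioned matrix. -/
def subBlock {m n : V → ℕ} (T : Matrix ((i : V) × Fin (m i)) ((j : V) × Fin (n j)) F)
    (A B : Set V) :
    Matrix {p : (i : V) × Fin (m i) // p.1 ∈ A} {q : (j : V) × Fin (n j) // q.1 ∈ B} F :=
  T.submatrix (fun p => p.1) (fun q => q.1)

/-- The Hankel block `T⟨Ā,A⟩` induced by `A`. -/
def hankelBlock {m n : V → ℕ} (T : Matrix ((i : V) × Fin (m i)) ((j : V) × Fin (n j)) F)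
    (A : Set V) :
    Matrix {p : (i : V) × Fin (m i) // p.1 ∈ Aᶜ} {q : (j : V) × Fin (n j) // q.1 ∈ A} F :=
  subBlock T Aᶜ A

/-- The number of border edges of `A`: edges of `G` with one endpoint in `A` and the other
outside of `A` (each such undirected edge is counted once, via its orientation out of `A`). -/
noncomputable def edgeCount (G : SimpleGraph V) (A : Set V) : ℕ :=
  Nat.card {e : V × V // e.1 ∈ A ∧ e.2 ∉ A ∧ G.Adj e.1 e.2}

/-- The vertex set of the connected component containing `i` after deleting the edge `{i,j}`. -/
def side (G : SimpleGraph V) (i j : V) : Set V :=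
  {v | (G.deleteEdges {s(i, j)}).Reachable i v}

/-- The unit Hankel block associated with the directed edge `(i,j)`. -/
def unitHankel (G : SimpleGraph V) {m n : V → ℕ}
    (T : Matrix ((i : V) × Fin (m i)) ((j : V) × Fin (n j)) F) (i j : V) :=
  hankelBlock T (side G i j)

/-- `outChain Out Trans k i w j` is the product
`Out^i_{p_{ν−1}} · Trans^{p_{ν−1}}_{i,p_{ν−2}} ⋯ Trans^{k}_{p₁,j}` along the walk
`w : k = p₀ − p₁ − ⋯ − p_ν = i`, with incoming edge `(j,k)`. -/
noncomputable def outChain {G : SimpleGraph V} {m : V → ℕ} {ρ : V → V → ℕ}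
    (Out : ∀ k i : V, Matrix (Fin (m k)) (Fin (ρ i k)) F)
    (Trans : ∀ k i j : V, Matrix (Fin (ρ k i)) (Fin (ρ j k)) F) :
    ∀ (k i : V), G.Walk k i → ∀ j : V, Matrix (Fin (m i)) (Fin (ρ j k)) F
  | k, _, .nil, j => Out k j
  | k, _, .cons (v := k') _ w, j => outChain Out Trans k' _ w k * Trans k k' j

/-- `pathMatrix Inp Trans Out j i w` is the product
`Out^i_{p_{ν−1}} · Trans^{p_{ν−1}}_{i,p_{ν−2}} ⋯ Trans^{p₁}_{p₂,j} · Inp^j_{p₁}` along the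
walk `w : j = p₀ − p₁ − ⋯ − p_ν = i` (and junk `0` for the empty walk). -/
noncomputable def pathMatrix {G : SimpleGraph V} {m n : V → ℕ} {ρ : V → V → ℕ}
    (Inp : ∀ k j : V, Matrix (Fin (ρ k j)) (Fin (n k)) F)
    (Trans : ∀ k i j : V, Matrix (Fin (ρ k i)) (Fin (ρ j k)) F)
    (Out : ∀ k i : V, Matrix (Fin (m k)) (Fin (ρ i k)) F) :
    ∀ (j i : V), G.Walk j i → Matrix (Fin (m i)) (Fin (n j)) F
  | _, _, .nil => 0
  | j, i, .cons (v := p1) _ w => outChain Out Trans p1 i w j * Inp j p1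

/-- A TSS representation of the graph-partitioned matrix `T` on the tree `G`, with
output dimensions `m`, input dimensions `n` and rank profile `ρ` (only the values of the
generators and of `ρ` on (pairs of adjoining) directed edges of `G` are relevant). -/
structure TSSRepr (G : SimpleGraph V) (m n : V → ℕ) (ρ : V → V → ℕ)
    (T : Matrix ((i : V) × Fin (m i)) ((j : V) × Fin (n j)) F) where
  D : ∀ k : V, Matrix (Fin (m k)) (Fin (n k)) F
  Inp : ∀ k j : V, Matrix (Fin (ρ k j)) (Fin (n k)) F
  Trans : ∀ k i j : V, Matrix (Fin (ρ k i)) (Fin (ρ j k)) F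
  Out : ∀ k i : V, Matrix (Fin (m k)) (Fin (ρ i k)) F
  diag : ∀ i : V, blockOf T i i = D i
  offdiag : ∀ {i j : V}, i ≠ j → ∀ w : G.Walk j i, w.IsPath →
      blockOf T i j = pathMatrix Inp Trans Out j i w


section Lemmas
open SimpleGraph
set_option linter.unusedSectionVars false
set_option linter.unusedVariables false
variable {G : SimpleGraph V}


lemma mem_side_self (G : SimpleGraph V) (i j : V) : i ∈ side G i j := Reachable.refl i

lemma not_mem_side (hG : G.IsTree) {i j : V} (h : G.Adj i j) : j ∉ side G i j := by
  have hb := (SimpleGraph.isAcyclic_iff_forall_adj_isBridge.mp hG.IsAcyclic) h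
  rw [SimpleGraph.isBridge_iff] at hb
  exact fun hr => hb hr

lemma reachable_delete_of_not_mem_edges {e : Sym2 V} {x y : V} (w : G.Walk x y)
    (he : e ∉ w.edges) : (G.deleteEdges {e}).Reachable x y := by
  refine ⟨w.transfer _ fun e' he' => ?_⟩
  rw [SimpleGraph.edgeSet_deleteEdges]
  exact ⟨w.edges_subset_edgeSet he', by simp only [Set.mem_singleton_iff]; rintro rfl; exact he he'⟩

lemma mem_side_of_reachable {i j v w : V} (hv : v ∈ side G i j)
    (h : (G.deleteEdges {s(i, j)}).Reachable v w) : w ∈ side G i j := hv.trans h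

/-- L1 -/
lemma not_mem_side_of_walk (hG : G.IsTree) {j k i : V} (h : G.Adj j k)
    (w : G.Walk k i) (hj : j ∉ w.support) : i ∉ side G j k := by
  intro hi
  have he : s(j, k) ∉ w.edges := fun hce => hj (w.fst_mem_support_of_mem_edges hce)
  have : (G.deleteEdges {s(j,k)}).Reachable i k :=
    (reachable_delete_of_not_mem_edges w he).symm
  exact not_mem_side hG h (mem_side_of_reachable hi this)

/-- L2 -/
lemma side_subset_side (hG : G.IsTree) {j k i : V} (hjk : G.Adj j k) (hki : G.Adj k i)
    (hij : j ≠ i) : side G j k ⊆ side G k i := by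
  intro v hv
  obtain ⟨p⟩ := hv
  have hk : k ∉ p.support := by
    intro hk
    exact not_mem_side hG hjk ⟨p.takeUntil k hk⟩
  have hedge : ∀ e ∈ p.edges, e ∈ (G.deleteEdges {s(k, i)}).edgeSet := by
    intro e he
    rw [SimpleGraph.edgeSet_deleteEdges]
    refine ⟨SimpleGraph.edgeSet_mono (G.deleteEdges_le _) (p.edges_subset_edgeSet he), ?_⟩
    simp only [Set.mem_singleton_iff]
    rintro rfl
    exact hk (p.fst_mem_support_of_mem_edges he)
  have hadj : (G.deleteEdges {s(k, i)}).Adj k j := by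
    rw [SimpleGraph.deleteEdges_adj]
    refine ⟨hjk.symm, ?_⟩
    simp only [Set.mem_singleton_iff, Sym2.congr_right]
    exact hij
  exact ⟨(Walk.cons hadj (p.transfer _ hedge))⟩

/-- L3 -/
lemma side_disjoint (hG : G.IsTree) {a b v : V} (h : G.Adj a b)
    (h1 : v ∈ side G a b) (h2 : v ∈ side G b a) : False := by
  rw [side, Sym2.eq_swap] at h2
  exact not_mem_side hG h (mem_side_of_reachable h1 (Reachable.symm h2))

/-- L4 -/
lemma support_subset_side (hG : G.IsTree) {a b x y : V} (hx : x ∈ side G a b)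
    (hy : y ∈ side G a b) {w : G.Walk x y} (hw : w.IsPath) :
    ∀ v ∈ w.support, v ∈ side G a b := by
  have hr : (G.deleteEdges {s(a, b)}).Reachable x y := hx.symm.trans hy
  obtain ⟨p⟩ := hr
  have hp : p.bypass.IsPath := Walk.bypass_isPath p
  have hq : (p.bypass.transfer G (fun e he => SimpleGraph.edgeSet_mono (G.deleteEdges_le _) (p.bypass.edges_subset_edgeSet he))).IsPath :=
    hp.transfer _
  have huniq : w = p.bypass.transfer G _ := ((hG.existsUnique_path x y).unique hw hq)
  intro v hv
  rw [huniq, Walk.support_transfer] at hv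
  have hv' : v ∈ p.support := Walk.support_bypass_subset _ hv
  exact mem_side_of_reachable hx ⟨p.takeUntil v hv'⟩

/-- L5 -/
lemma edgeCount_side (hG : G.IsTree) {i j : V} (h : G.Adj i j) :
    Nat.card {e : V × V // e.1 ∈ side G i j ∧ e.2 ∉ side G i j ∧ G.Adj e.1 e.2} = 1 := by
  rw [Nat.card_eq_one_iff_unique]
  constructor
  · constructor
    rintro ⟨⟨a, b⟩, ha, hb, hab⟩ ⟨⟨a', b'⟩, ha', hb', hab'⟩
    have key : ∀ (a b : V), a ∈ side G i j → b ∉ side G i j → G.Adj a b → (a, b) = (i, j) := by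
      intro a b ha hb hab
      by_cases hedge : s(a, b) = s(i, j)
      · rcases Sym2.eq_iff.mp hedge with ⟨rfl, rfl⟩ | ⟨rfl, rfl⟩
        · rfl
        · exact absurd ha (not_mem_side hG h)
      · exfalso
        apply hb
        apply mem_side_of_reachable ha
        exact Adj.reachable (by rw [SimpleGraph.deleteEdges_adj]; exact ⟨hab, by simpa using hedge⟩)
    have h1 := key a b ha hb hab
    have h2 := key a' b' ha' hb' hab'
    exact Subtype.ext (h1.trans h2.symm)
  · exact ⟨⟨(i, j), mem_side_self G i j, not_mem_side hG h, h⟩⟩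



lemma exists_rank_factorization {F : Type*} [Field F] {α β : Type*} [Fintype α] [Fintype β]
    [DecidableEq β] (M : Matrix α β F) :
    ∃ (O : Matrix α (Fin M.rank) F) (I : Matrix (Fin M.rank) β F)
      (R : Matrix β (Fin M.rank) F), M = O * I ∧ I * R = 1 := by
  classical
  set rng := LinearMap.range M.mulVecLin with hrng
  have hfr : M.rank = Module.finrank F rng := rfl
  let b : Module.Basis (Fin M.rank) F rng := hfr ▸ Module.finBasis F rng
  let col : β → rng := fun j => ⟨M.mulVec (Pi.single j 1), ⟨Pi.single j 1, rfl⟩⟩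
  let O : Matrix α (Fin M.rank) F := fun a x => ((b x : α → F)) a
  let I : Matrix (Fin M.rank) β F := fun x j => b.repr (col j) x
  have hcol : ∀ v : β → F, (∑ j, v j • col j : rng) = ⟨M.mulVec v, ⟨v, rfl⟩⟩ := by
    intro v
    apply Subtype.ext
    push_cast
    ext a
    rw [Finset.sum_apply]
    simp only [Pi.smul_apply, smul_eq_mul, Matrix.mulVec_single, mul_one]
    simp only [col, Matrix.mulVec_single, mul_one]
    simp [Matrix.mulVec, dotProduct, mul_comm]
  have hIv : ∀ v : β → F, I.mulVec v = b.repr ⟨M.mulVec v, ⟨v, rfl⟩⟩ := by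
    intro v
    have h3 : b.repr.toLinearMap (∑ j, v j • col j) = ∑ j, v j • b.repr.toLinearMap (col j) :=
      by rw [map_sum]; simp_rw [_root_.map_smul]
    rw [hcol v] at h3
    ext x
    have := congrArg (fun f : (Fin M.rank →₀ F) => f x) h3
    simp only [LinearEquiv.coe_toLinearMap, Finsupp.coe_finset_sum, Finset.sum_apply,
      Finsupp.smul_apply, smul_eq_mul] at this
    rw [this]
    simp [Matrix.mulVec, dotProduct, I, mul_comm]
  have hMOI : M = O * I := by
    ext a j
    have h1 : (M.mulVec (Pi.single j 1)) a = M a j := by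
      simp [Matrix.mulVec_single]
    have h2 := congrArg (fun z : rng => (z : α → F) a) (b.sum_repr (col j))
    simp only [AddSubmonoidClass.coe_finset_sum, Finset.sum_apply, SetLike.val_smul,
      Pi.smul_apply, smul_eq_mul] at h2
    rw [Matrix.mul_apply, ← h1, show (M *ᵥ Pi.single j 1) a = ((col j : rng) : α → F) a from rfl, ← h2]
    exact Finset.sum_congr rfl fun x _ => mul_comm _ _
  have hsurj : ∀ y : Fin M.rank → F, ∃ v, I.mulVec v = y := by
    intro y
    set u : rng := b.repr.symm (Finsupp.equivFunOnFinite.symm y) with hu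
    obtain ⟨v, hv⟩ := u.2
    refine ⟨v, ?_⟩
    have h4 : (⟨M.mulVec v, ⟨v, rfl⟩⟩ : rng) = u := Subtype.ext (by rw [← hv]; rfl)
    rw [hIv v, h4, hu]
    ext x
    simp
  choose Rv hRv using hsurj
  let R : Matrix β (Fin M.rank) F := fun j x => Rv (Pi.single x 1) j
  refine ⟨O, I, R, hMOI, ?_⟩
  ext x x'
  have := congrFun (hRv (Pi.single x' 1)) x
  rw [Matrix.mul_apply]
  simp only [Matrix.mulVec, dotProduct, R] at this ⊢
  rw [this]
  simp [Matrix.one_apply, Pi.single_apply, eq_comm]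

end Lemmas


section Construction
open SimpleGraph
set_option linter.unusedSectionVars false
set_option linter.unusedVariables false

variable {G : SimpleGraph V} {m n : V → ℕ} {ρ : V → V → ℕ}

lemma outChain_nil (Out : ∀ k i : V, Matrix (Fin (m k)) (Fin (ρ i k)) F)
    (Trans : ∀ k i j : V, Matrix (Fin (ρ k i)) (Fin (ρ j k)) F) (k j : V) :
    outChain Out Trans k k (Walk.nil (G := G)) j = Out k j := rfl

lemma outChain_cons (Out : ∀ k i : V, Matrix (Fin (m k)) (Fin (ρ i k)) F)
    (Trans : ∀ k i j : V, Matrix (Fin (ρ k i)) (Fin (ρ j k)) F) {k k' i : V}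
    (h : G.Adj k k') (w : G.Walk k' i) (j : V) :
    outChain Out Trans k i (.cons h w) j = outChain Out Trans k' i w k * Trans k k' j := rfl

variable (T : Matrix ((i : V) × Fin (m i)) ((j : V) × Fin (n j)) F)
variable (O : ∀ j k : V, Matrix {p : (i : V) × Fin (m i) // p.1 ∈ (side G j k)ᶜ} (Fin (ρ j k)) F)
variable (I : ∀ j k : V, Matrix (Fin (ρ j k)) {q : (j' : V) × Fin (n j') // q.1 ∈ side G j k} F)
variable (R : ∀ j k : V, Matrix {q : (j' : V) × Fin (n j') // q.1 ∈ side G j k} (Fin (ρ j k)) F)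

/-- Input-to-edge generators built from the factorizations. -/
noncomputable def InpC : ∀ k j : V, Matrix (Fin (ρ k j)) (Fin (n k)) F := fun k j x y =>
  I k j x ⟨⟨k, y⟩, mem_side_self G k j⟩

/-- Edge-to-output generators built from the factorizations. -/
noncomputable def OutC : ∀ k i : V, Matrix (Fin (m k)) (Fin (ρ i k)) F := fun k i =>
  if h : k ∈ (side G i k)ᶜ then (fun a x => O i k ⟨⟨k, a⟩, h⟩ x) else 0

/-- Transition generators built from the factorizations. -/
noncomputable def TransC : ∀ k i j : V, Matrix (Fin (ρ k i)) (Fin (ρ j k)) F := fun k i j =>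
  if h : side G j k ⊆ side G k i then
    ((I k i).submatrix id (fun q : {q : (j' : V) × Fin (n j') // q.1 ∈ side G j k} =>
      (⟨q.1, h q.2⟩ : {q : (j' : V) × Fin (n j') // q.1 ∈ side G k i}))) * R j k
  else 0

lemma claimB (hG : G.IsTree)
    (hOI : ∀ j k : V, unitHankel G T j k = O j k * I j k)
    (hIR : ∀ j k : V, I j k * R j k = 1)
    {j k k' : V} (hjk : G.Adj j k) (hkk' : G.Adj k k') (hjne : j ≠ k')
    (sig : (i : V) × Fin (m i)) (h1 : sig.1 ∈ (side G k k')ᶜ) (h2 : sig.1 ∈ (side G j k)ᶜ)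
    (x : Fin (ρ j k)) :
    (O k k' * TransC I R k k' j) ⟨sig, h1⟩ x = O j k ⟨sig, h2⟩ x := by
  have hsub : side G j k ⊆ side G k k' := side_subset_side hG hjk hkk' hjne
  have hOjk : O j k = unitHankel G T j k * R j k := by
    rw [hOI, Matrix.mul_assoc, hIR, Matrix.mul_one]
  rw [TransC, dif_pos hsub, ← Matrix.mul_assoc, hOjk]
  rw [Matrix.mul_apply, Matrix.mul_apply]
  refine Finset.sum_congr rfl fun q _ => ?_
  congr 1
  calc (O k k' * (I k k').submatrix id _) ⟨sig, h1⟩ q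
      = (O k k' * I k k') ⟨sig, h1⟩ ⟨q.1, hsub q.2⟩ := by
        rw [Matrix.mul_apply, Matrix.mul_apply]; rfl
    _ = unitHankel G T k k' ⟨sig, h1⟩ ⟨q.1, hsub q.2⟩ := by rw [hOI]
    _ = unitHankel G T j k ⟨sig, h2⟩ q := rfl

lemma claimA (hG : G.IsTree)
    (hOI : ∀ j k : V, unitHankel G T j k = O j k * I j k)
    (hIR : ∀ j k : V, I j k * R j k = 1) :
    ∀ {k i : V} (w : G.Walk k i) {j : V} (hjk : G.Adj j k),
    (Walk.cons hjk w).IsPath → ∀ (hi : i ∈ (side G j k)ᶜ) (a : Fin (m i)) (x : Fin (ρ j k)),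
    outChain (OutC O) (TransC I R) k i w j a x = O j k ⟨⟨i, a⟩, hi⟩ x := by
  intro k i w
  induction w with
  | nil =>
    intro j hjk hp hi a x
    rw [outChain_nil]
    unfold OutC
    exact congrFun (congrFun (dif_pos hi) a) x
  | @cons k k' i h' w' ih =>
    intro j hjk hp hi a x
    have hp' : (Walk.cons h' w').IsPath := hp.of_cons
    have hknotin : k ∉ w'.support := ((Walk.cons_isPath_iff _ _).mp hp').2
    have hi' : i ∈ (side G k k')ᶜ := not_mem_side_of_walk hG h' w' hknotin
    have hjne : j ≠ k' := by
      rintro rfl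
      have := ((Walk.cons_isPath_iff _ _).mp hp).2
      rw [Walk.support_cons] at this
      exact this (List.mem_cons_of_mem _ w'.start_mem_support)
    rw [outChain_cons, Matrix.mul_apply]
    calc ∑ y, outChain (OutC O) (TransC I R) k' i w' k a y * TransC I R k k' j y x
        = ∑ y, O k k' ⟨⟨i, a⟩, hi'⟩ y * TransC I R k k' j y x := by
          refine Finset.sum_congr rfl fun y _ => by rw [ih (j := k) h' hp' hi' a y]
      _ = (O k k' * TransC I R k k' j) ⟨⟨i, a⟩, hi'⟩ x := (Matrix.mul_apply).symm
      _ = O j k ⟨⟨i, a⟩, hi⟩ x := claimB T O I R hG hOI hIR hjk h' hjne _ hi' hi x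

/-- The TSS representation constructed from rank factorizations of unit Hankel blocks. -/
noncomputable def reprC (hG : G.IsTree)
    (hOI : ∀ j k : V, unitHankel G T j k = O j k * I j k)
    (hIR : ∀ j k : V, I j k * R j k = 1) : TSSRepr G m n ρ T where
  D := fun k => blockOf T k k
  Inp := InpC I
  Trans := TransC I R
  Out := OutC O
  diag := fun i => rfl
  offdiag := by
    intro i j hij w hw
    cases w with
    | nil => exact absurd rfl hij.symm
    | @cons j p1 i hjp1 w' =>
      have hjnotin : j ∉ w'.support := ((Walk.cons_isPath_iff _ _).mp hw).2
      have hi : i ∈ (side G j p1)ᶜ := not_mem_side_of_walk hG hjp1 w' hjnotin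
      ext a b
      show T ⟨i, a⟩ ⟨j, b⟩ = (outChain (OutC O) (TransC I R) p1 i w' j * InpC I j p1) a b
      rw [Matrix.mul_apply]
      calc T ⟨i, a⟩ ⟨j, b⟩
          = (unitHankel G T j p1) ⟨⟨i, a⟩, hi⟩ ⟨⟨j, b⟩, mem_side_self G j p1⟩ := rfl
        _ = (O j p1 * I j p1) ⟨⟨i, a⟩, hi⟩ ⟨⟨j, b⟩, mem_side_self G j p1⟩ := by rw [hOI]
        _ = ∑ x, outChain (OutC O) (TransC I R) p1 i w' j a x * InpC I j p1 x b := by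
            rw [Matrix.mul_apply]
            refine Finset.sum_congr rfl fun x _ => ?_
            rw [claimA T O I R hG hOI hIR w' hjp1 hw hi a x]
            rfl

end Construction

section Backward
open SimpleGraph
set_option linter.unusedSectionVars false
set_option linter.unusedVariables false

variable {G : SimpleGraph V} {m n : V → ℕ} {ρ : V → V → ℕ}

/-- Chain of transition matrices along a walk. -/
noncomputable def transChain
    (Trans : ∀ k i j : V, Matrix (Fin (ρ k i)) (Fin (ρ j k)) F) :
    ∀ (j a : V), G.Walk j a → ∀ b k : V, Matrix (Fin (ρ a b)) (Fin (ρ k j)) F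
  | j, _, .nil, b, k => Trans j b k
  | j, _, .cons (v := p1) _ w, b, k => transChain Trans p1 _ w b j * Trans j p1 k

/-- Chain of transition matrices followed by an input matrix along a walk. -/
noncomputable def inChain
    (Inp : ∀ k j : V, Matrix (Fin (ρ k j)) (Fin (n k)) F)
    (Trans : ∀ k i j : V, Matrix (Fin (ρ k i)) (Fin (ρ j k)) F) :
    ∀ (j a : V), G.Walk j a → ∀ b : V, Matrix (Fin (ρ a b)) (Fin (n j)) F
  | j, _, .nil, b => Inp j b
  | j, _, .cons (v := p1) _ w, b => transChain Trans p1 _ w b j * Inp j p1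

variable (Inp : ∀ k j : V, Matrix (Fin (ρ k j)) (Fin (n k)) F)
  (Trans : ∀ k i j : V, Matrix (Fin (ρ k i)) (Fin (ρ j k)) F)
  (Out : ∀ k i : V, Matrix (Fin (m k)) (Fin (ρ i k)) F)

lemma outChain_append {k a b i : V} (w₁ : G.Walk k a) (h : G.Adj a b) (w₂ : G.Walk b i)
    (j : V) :
    outChain Out Trans k i (w₁.append (Walk.cons h w₂)) j =
      outChain Out Trans b i w₂ a * transChain Trans k a w₁ b j := by
  induction w₁ generalizing j with
  | nil =>
    rw [Walk.nil_append]
    rfl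
  | @cons x y _ h₁ w₁' ih =>
    rw [Walk.cons_append]
    show outChain Out Trans y i (w₁'.append (Walk.cons h w₂)) x * Trans x y j = _
    rw [ih, Matrix.mul_assoc]
    rfl

lemma pathMatrix_append {j a b i : V} (w₁ : G.Walk j a) (h : G.Adj a b) (w₂ : G.Walk b i) :
    pathMatrix Inp Trans Out j i (w₁.append (Walk.cons h w₂)) =
      outChain Out Trans b i w₂ a * inChain Inp Trans j a w₁ b := by
  cases w₁ with
  | nil =>
    rw [Walk.nil_append]
    rfl
  | @cons j p1 a h₁ w₁' =>
    rw [Walk.cons_append]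
    show outChain Out Trans p1 i (w₁'.append (Walk.cons h w₂)) j * Inp j p1 = _
    rw [outChain_append, Matrix.mul_assoc]
    rfl

lemma exists_cross_dart {A : Set V} :
    ∀ {x i : V} (w : G.Walk x i), x ∈ A → i ∉ A →
      ∃ d ∈ w.darts, d.toProd.1 ∈ A ∧ d.toProd.2 ∉ A := by
  intro x i w
  induction w with
  | nil => intro hx hi; exact absurd hx hi
  | @cons x p i h w' ih =>
    intro hx hi
    by_cases hp : p ∈ A
    · obtain ⟨d, hd, hcross⟩ := ih hp hi
      exact ⟨d, by rw [Walk.darts_cons]; exact List.mem_cons_of_mem _ hd, hcross⟩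
    · exact ⟨⟨(x, p), h⟩, by rw [Walk.darts_cons]; exact List.mem_cons_self, hx, hp⟩

lemma exists_last_cross {A : Set V} :
    ∀ {x i : V} (w : G.Walk x i),
      (∃ d ∈ w.darts, d.toProd.1 ∈ A ∧ d.toProd.2 ∉ A) →
      ∃ (a b : V) (hab : G.Adj a b) (w₁ : G.Walk x a) (w₂ : G.Walk b i),
        a ∈ A ∧ b ∉ A ∧ w = w₁.append (Walk.cons hab w₂) ∧
          ∀ d ∈ w₂.darts, ¬(d.toProd.1 ∈ A ∧ d.toProd.2 ∉ A) := by
  intro x i w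
  induction w with
  | nil => rintro ⟨d, hd, -⟩; simp at hd
  | @cons x p i h w' ih =>
    intro hex
    by_cases hc : ∃ d ∈ w'.darts, d.toProd.1 ∈ A ∧ d.toProd.2 ∉ A
    · obtain ⟨a, b, hab, w₁, w₂, ha, hb, hdec, hnc⟩ := ih hc
      exact ⟨a, b, hab, Walk.cons h w₁, w₂, ha, hb, by rw [hdec, Walk.cons_append], hnc⟩
    · obtain ⟨d, hd, hcross⟩ := hex
      rw [Walk.darts_cons] at hd
      rcases List.mem_cons.mp hd with rfl | hd'
      · refine ⟨x, p, h, Walk.nil, w', hcross.1, hcross.2, by rw [Walk.nil_append], ?_⟩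
        intro d' hd' hcr
        exact hc ⟨d', hd', hcr⟩
      · exact absurd ⟨d, hd', hcross⟩ hc

lemma list_last_unique {α : Type*} {P : α → Prop} :
    ∀ (l₁ l₃ : List α) {l₂ l₄ : List α} {d₀ d : α}, P d₀ → P d →
      (∀ x ∈ l₂, ¬P x) → (∀ x ∈ l₄, ¬P x) → l₁ ++ d₀ :: l₂ = l₃ ++ d :: l₄ → d₀ = d := by
  intro l₁
  induction l₁ with
  | nil =>
    intro l₃
    cases l₃ with
    | nil =>
      intro l₂ l₄ d₀ d h₀ h hl₂ hl₄ heq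
      simpa using (List.cons.injEq _ _ _ _ ▸ congrArg id heq : _) |>.1
    | cons y l₃' =>
      intro l₂ l₄ d₀ d h₀ h hl₂ hl₄ heq
      simp only [List.nil_append, List.cons_append, List.cons.injEq] at heq
      obtain ⟨rfl, heq2⟩ := heq
      exact absurd h (hl₂ d (heq2 ▸ List.mem_append_right _ (List.mem_cons_self)))
  | cons y l₁' ih =>
    intro l₃
    cases l₃ with
    | nil =>
      intro l₂ l₄ d₀ d h₀ h hl₂ hl₄ heq
      simp only [List.cons_append, List.nil_append, List.cons.injEq] at heq
      obtain ⟨rfl, heq2⟩ := heq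
      exact absurd h₀ (hl₄ d₀ (heq2.symm ▸ List.mem_append_right _ (List.mem_cons_self)))
    | cons z l₃' =>
      intro l₂ l₄ d₀ d h₀ h hl₂ hl₄ heq
      simp only [List.cons_append, List.cons.injEq] at heq
      exact ih l₃' h₀ h hl₂ hl₄ heq.2

lemma matrix_rank_add_le {α β : Type*} [Fintype α] [Fintype β]
    (M N : Matrix α β F) : (M + N).rank ≤ M.rank + N.rank := by
  classical
  have hr : LinearMap.range (M + N).mulVecLin ≤
      LinearMap.range M.mulVecLin ⊔ LinearMap.range N.mulVecLin := by
    rintro x ⟨v, rfl⟩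
    rw [Matrix.mulVecLin_add]
    exact Submodule.add_mem_sup ⟨v, rfl⟩ ⟨v, rfl⟩
  calc (M + N).rank
      ≤ Module.finrank F ↥(LinearMap.range M.mulVecLin ⊔ LinearMap.range N.mulVecLin) :=
        Submodule.finrank_mono hr
    _ ≤ M.rank + N.rank := Submodule.finrank_add_le_finrank_add_finrank _ _

lemma matrix_rank_sum_le {α β ι : Type*} [Fintype α] [Fintype β]
    (s : Finset ι) (M : ι → Matrix α β F) :
    (∑ e ∈ s, M e).rank ≤ ∑ e ∈ s, (M e).rank := by
  classical
  induction s using Finset.cons_induction with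
  | empty => simp
  | cons a s ha ih =>
    rw [Finset.sum_cons, Finset.sum_cons]
    exact (matrix_rank_add_le _ _).trans (Nat.add_le_add_left ih _)

end Backward

section Backward2
open SimpleGraph
set_option linter.unusedSectionVars false
set_option linter.unusedVariables false

lemma girs_of_tss (G : SimpleGraph V) (hG : G.IsTree) {m n : V → ℕ} {c : ℕ} {ρ : V → V → ℕ}
    (T : Matrix ((i : V) × Fin (m i)) ((j : V) × Fin (n j)) F)
    (hρ : ∀ i j : V, G.Adj i j → ρ i j ≤ c) (𝓡 : TSSRepr G m n ρ T) :
    ∀ A : Set V, (hankelBlock T A).rank ≤ c * edgeCount G A := by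
  classical
  intro A
  have hup := hG.existsUnique_path
  set P : ∀ v w : V, G.Walk v w := fun v w => (hup v w).exists.choose with hP
  have hPpath : ∀ v w : V, (P v w).IsPath := fun v w => (hup v w).exists.choose_spec
  have hPuniq : ∀ {v w : V} (q : G.Walk v w), q.IsPath → q = P v w :=
    fun q hq => (hup _ _).unique hq (hPpath _ _)
  set Border := {e : V × V // e.1 ∈ A ∧ e.2 ∉ A ∧ G.Adj e.1 e.2} with hBorder
  let OE : ∀ e : Border, Matrix {p : (i : V) × Fin (m i) // p.1 ∈ Aᶜ} (Fin (ρ e.1.1 e.1.2)) F :=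
    fun e p x =>
      if h : p.1.1 ∈ side G e.1.2 e.1.1 ∧
          ∀ d ∈ (P e.1.2 p.1.1).darts, ¬(d.toProd.1 ∈ A ∧ d.toProd.2 ∉ A) then
        outChain 𝓡.Out 𝓡.Trans e.1.2 p.1.1 (P e.1.2 p.1.1) e.1.1 p.1.2 x
      else 0
  let IE : ∀ e : Border, Matrix (Fin (ρ e.1.1 e.1.2)) {q : (j : V) × Fin (n j) // q.1 ∈ A} F :=
    fun e x q =>
      if h : q.1.1 ∈ side G e.1.1 e.1.2 then
        inChain 𝓡.Inp 𝓡.Trans q.1.1 e.1.1 (P q.1.1 e.1.1) e.1.2 x q.1.2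
      else 0
  have key : hankelBlock T A = ∑ e : Border, OE e * IE e := by
    ext pp qq
    obtain ⟨⟨i, a⟩, hi⟩ := pp
    obtain ⟨⟨j, b⟩, hj⟩ := qq
    rw [Matrix.sum_apply]
    have hiA : i ∉ A := hi
    have hij : i ≠ j := fun h => hiA (h ▸ hj)
    set w : G.Walk j i := P j i with hw
    have hwpath : w.IsPath := hPpath j i
    obtain ⟨a0, b0, hab, w₁, w₂, ha0, hb0, hdec, hnc⟩ :=
      exists_last_cross w (exists_cross_dart w hj hiA)
    set e0 : Border := ⟨(a0, b0), ha0, hb0, hab⟩ with he0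
    have hw2path : w₂.IsPath := by
      have := hdec ▸ hwpath
      exact ((Walk.cons_isPath_iff _ _).mp this.of_append_right).1
    have hw1path : w₁.IsPath := (hdec ▸ hwpath).of_append_left
    -- the middle edge appears in neither `w₁` nor `w₂`
    have hnodup : (w₁.edges ++ s(a0, b0) :: w₂.edges).Nodup := by
      have := hwpath.isTrail.edges_nodup
      rw [hdec, Walk.edges_append, Walk.edges_cons] at this
      exact this
    have hnd := List.nodup_append'.mp hnodup
    have hs2 : s(a0, b0) ∉ w₂.edges := (List.nodup_cons.mp hnd.2.1).1
    have hs1 : s(a0, b0) ∉ w₁.edges :=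
      fun h => hnd.2.2 h (List.mem_cons_self)
    have hi_side : i ∈ side G b0 a0 := by
      refine mem_side_of_reachable (mem_side_self G b0 a0) ?_
      exact reachable_delete_of_not_mem_edges w₂ (by rw [Sym2.eq_swap]; exact hs2)
    have hj_side : j ∈ side G a0 b0 :=
      (reachable_delete_of_not_mem_edges w₁ hs1).symm
    have hseq2 : P b0 i = w₂ := (hPuniq w₂ hw2path).symm
    have hseq1 : P j a0 = w₁ := (hPuniq w₁ hw1path).symm
    rw [Finset.sum_eq_single e0]
    · -- main term
      rw [Matrix.mul_apply]
      have hOE : ∀ x, OE e0 ⟨⟨i, a⟩, hi⟩ x =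
          outChain 𝓡.Out 𝓡.Trans b0 i w₂ a0 a x := by
        intro x
        show dite _ _ _ = _
        rw [dif_pos ⟨hi_side, by rw [hseq2]; exact hnc⟩, hseq2]
      have hIE : ∀ x, IE e0 x ⟨⟨j, b⟩, hj⟩ =
          inChain 𝓡.Inp 𝓡.Trans j a0 w₁ b0 x b := by
        intro x
        show dite _ _ _ = _
        rw [dif_pos hj_side, hseq1]
      calc T ⟨i, a⟩ ⟨j, b⟩
          = blockOf T i j a b := rfl
        _ = pathMatrix 𝓡.Inp 𝓡.Trans 𝓡.Out j i w a b := by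
            rw [𝓡.offdiag hij w hwpath]
        _ = (outChain 𝓡.Out 𝓡.Trans b0 i w₂ a0 * inChain 𝓡.Inp 𝓡.Trans j a0 w₁ b0) a b := by
            rw [hdec, pathMatrix_append]
        _ = ∑ x, OE e0 ⟨⟨i, a⟩, hi⟩ x * IE e0 x ⟨⟨j, b⟩, hj⟩ := by
            rw [Matrix.mul_apply]
            exact Finset.sum_congr rfl fun x _ => by rw [hOE x, hIE x]
    · -- other terms vanish
      rintro ⟨⟨a', b'⟩, ha', hb', hab'⟩ - hne
      rw [Matrix.mul_apply]
      by_cases hcond1 : i ∈ side G b' a' ∧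
          ∀ d ∈ (P b' i).darts, ¬(d.toProd.1 ∈ A ∧ d.toProd.2 ∉ A)
      · by_cases hcond2 : j ∈ side G a' b'
        · exfalso
          -- the unique path from j to i passes through the edge (a', b') with no crossing after
          have hsub1 : ∀ v ∈ (P j a').support, v ∈ side G a' b' :=
            support_subset_side hG hcond2 (mem_side_self G a' b') (hPpath j a')
          have hsub2 : ∀ v ∈ (P b' i).support, v ∈ side G b' a' :=
            support_subset_side hG (mem_side_self G b' a') hcond1.1 (hPpath b' i)
          have hWpath : ((P j a').append (Walk.cons hab' (P b' i))).IsPath := by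
            rw [Walk.isPath_def, Walk.support_append, Walk.support_cons, List.tail_cons]
            refine List.Nodup.append ((Walk.isPath_def _).mp (hPpath j a'))
              ((Walk.isPath_def _).mp (hPpath b' i)) ?_
            intro v hv1 hv2
            exact side_disjoint hG hab' (hsub1 v hv1) (hsub2 v hv2)
          have hWw : w = (P j a').append (Walk.cons hab' (P b' i)) :=
            (hPuniq _ hWpath).symm
          have hdarts : w₁.darts ++ (⟨(a0, b0), hab⟩ : G.Dart) :: w₂.darts =
              (P j a').darts ++ (⟨(a', b'), hab'⟩ : G.Dart) :: (P b' i).darts := by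
            have := congrArg Walk.darts (hdec.symm.trans hWw)
            rwa [Walk.darts_append, Walk.darts_cons, Walk.darts_append, Walk.darts_cons]
              at this
          have hdeq : (⟨(a0, b0), hab⟩ : G.Dart) = ⟨(a', b'), hab'⟩ :=
            list_last_unique (P := fun d : G.Dart => d.toProd.1 ∈ A ∧ d.toProd.2 ∉ A)
              w₁.darts (P j a').darts ⟨ha0, hb0⟩ ⟨ha', hb'⟩ hnc hcond1.2 hdarts
          apply hne
          apply Subtype.ext
          have := congrArg SimpleGraph.Dart.toProd hdeq
          exact this.symm
        · refine Finset.sum_eq_zero fun x _ => ?_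
          have : IE ⟨(a', b'), ha', hb', hab'⟩ x ⟨⟨j, b⟩, hj⟩ = 0 := dif_neg hcond2
          rw [this, mul_zero]
      · refine Finset.sum_eq_zero fun x _ => ?_
        have : OE ⟨(a', b'), ha', hb', hab'⟩ ⟨⟨i, a⟩, hi⟩ x = 0 := dif_neg hcond1
        rw [this, zero_mul]
    · intro h
      exact absurd (Finset.mem_univ e0) h
  rw [key]
  calc (∑ e : Border, OE e * IE e).rank
      ≤ ∑ e : Border, (OE e * IE e).rank := matrix_rank_sum_le _ _
    _ ≤ ∑ _e : Border, c := by
        refine Finset.sum_le_sum fun e _ => ?_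
        calc (OE e * IE e).rank ≤ (IE e).rank := Matrix.rank_mul_le_right _ _
          _ ≤ Fintype.card (Fin (ρ e.1.1 e.1.2)) := Matrix.rank_le_card_height _
          _ = ρ e.1.1 e.1.2 := Fintype.card_fin _
          _ ≤ c := hρ _ _ e.2.2.2
    _ = c * edgeCount G A := by
        rw [Finset.sum_const, Finset.card_univ, smul_eq_mul, edgeCount,
          Nat.card_eq_fintype_card, mul_comm]

end Backward2

lemma tss_of_girs (G : SimpleGraph V) (hG : G.IsTree) (m n : V → ℕ) (c : ℕ)
    (T : Matrix ((i : V) × Fin (m i)) ((j : V) × Fin (n j)) F)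
    (girs : ∀ A : Set V, (hankelBlock T A).rank ≤ c * edgeCount G A) :
    ∃ ρ : V → V → ℕ, (∀ i j : V, G.Adj i j → ρ i j ≤ c) ∧
      Nonempty (TSSRepr G m n ρ T) := by
  classical
  choose O I R hOI hIR using fun (j k : V) => exists_rank_factorization (unitHankel G T j k)
  refine ⟨fun j k => (unitHankel G T j k).rank, ?_, ⟨reprC T O I R hG hOI hIR⟩⟩
  intro i j hij
  have h1 := girs (side G i j)
  have h2 : edgeCount G (side G i j) = 1 := edgeCount_side hG hij
  rw [h2, mul_one] at h1
  exact h1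

/-- `(T,G)` satisfies the GIRS property with constant `c > 0` if and only if
`T` admits a TSS representation on `G` whose rank profile satisfies `ρ(e) ≤ c` on every
directed edge `e`. -/
theorem girs_iff_tss {F : Type*} [Field F] {V : Type*} [Fintype V] [DecidableEq V]
    (G : SimpleGraph V) (hG : G.IsTree) (m n : V → ℕ) (c : ℕ) (hc : 0 < c)
    (T : Matrix ((i : V) × Fin (m i)) ((j : V) × Fin (n j)) F) :
    (∀ A : Set V, (hankelBlock T A).rank ≤ c * edgeCount G A) ↔
      ∃ ρ : V → V → ℕ, (∀ i j : V, G.Adj i j → ρ i j ≤ c) ∧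
        Nonempty (TSSRepr G m n ρ T) := by
  constructor
  · intro girs
    exact tss_of_girs G hG m n c T girs
  · rintro ⟨ρ, hρ, ⟨𝓡⟩⟩
    exact girs_of_tss G hG T hρ 𝓡

end TSS
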